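/- arXiv:1111.5989 — 4 statements merged into one kernel-verified Lean document; each statement's English description precedes it below -/
import Mathlib

section
/- In the uniform-kernel setting, under assumption (A3), if λ1 > 0 and either λ2/λ1 > v_1(x) or λ2/λ1 < v_0(x), then sup_{t1,t2 ∈ ℝ} {λ1 t1 + λ2 t2 − ∫ (e^{t1+t2 l(v)} − 1) f_v(x) g(v) dv} = ∞. -/
set_option autoImplicit false

open MeasureTheory Filter Set

theorem rate_function_infinite_outside_range
    (l : ℝ → ℝ) (hl : Measurable l)
    (g : ℝ → ℝ) (hg_nonneg : ∀ v, 0 ≤ g v) (hg_prob : ∫ v, g v = 1)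
    (f : ℝ → ℝ) (hf_nonneg : ∀ v, 0 ≤ f v)
    (hfg_pos : 0 < ∫ v, f v * g v)
    -- (A3)
    (hA3i : ∀ a b : ℝ, Integrable (fun v => (Real.exp (a + b * l v) - 1) * f v * g v))
    (hA3ii : ∀ a : ℝ, Integrable (fun v => Real.exp (a * l v) * f v * g v))
    (hA3iii : ∀ a : ℝ, Integrable (fun v => Real.exp (a * l v) * f v * g v * l v))
    (hA3iv : ∀ a : ℝ, Integrable (fun v => Real.exp (a * l v) * f v * g v * (l v) ^ 2))
    -- V_x and the bounds v₀(x), v₁(x)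
    (V : ℝ → ℝ)
    (hV : ∀ t, V t = (∫ u, Real.exp (t * l u) * l u * f u * g u) /
      (∫ v, Real.exp (t * l v) * f v * g v))
    (v₀ v₁ : EReal) (hv₀ : v₀ = ⨅ t : ℝ, (V t : EReal)) (hv₁ : v₁ = ⨆ t : ℝ, (V t : EReal))
    (lam₁ lam₂ : ℝ) (hlam₁ : 0 < lam₁)
    (hout : v₁ < ((lam₂ / lam₁ : ℝ) : EReal) ∨ ((lam₂ / lam₁ : ℝ) : EReal) < v₀) :
    (⨆ t : ℝ × ℝ, ((lam₁ * t.1 + lam₂ * t.2 -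
      ∫ v, (Real.exp (t.1 + t.2 * l v) - 1) * f v * g v : ℝ) : EReal)) = ⊤ := by
  set r : ℝ := lam₂ / lam₁ with hr
  have hfg_int : Integrable (fun v => f v * g v) := by simpa using hA3ii 0
  have hFint : ∀ t : ℝ, Integrable (fun v => Real.exp (t * l v) * (f v * g v)) := by
    intro t; simpa [mul_assoc] using hA3ii t
  have hF'int : ∀ t : ℝ, Integrable (fun v => Real.exp (t * l v) * l v * (f v * g v)) := by
    intro t
    have h : (fun v => Real.exp (t * l v) * l v * (f v * g v))
        = fun v => Real.exp (t * l v) * f v * g v * l v := by funext v; ring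
    rw [h]; exact hA3iii t
  set W : ℝ → ℝ := fun t => ∫ v, Real.exp (t * l v) * (f v * g v) with hW
  set N : ℝ → ℝ := fun t => ∫ v, Real.exp (t * l v) * l v * (f v * g v) with hN
  set B : ℝ := ∫ v, f v * g v with hB
  have hfg_nn : ∀ v, 0 ≤ f v * g v := fun v => mul_nonneg (hf_nonneg v) (hg_nonneg v)
  have hW_pos : ∀ t, 0 < W t := by
    intro t
    have hnn : 0 ≤ fun v => Real.exp (t * l v) * (f v * g v) :=
      fun v => mul_nonneg (Real.exp_pos _).le (hfg_nn v)
    rw [hW]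
    rw [integral_pos_iff_support_of_nonneg hnn (hFint t)]
    have hs : Function.support (fun v => Real.exp (t * l v) * (f v * g v))
        = Function.support (fun v => f v * g v) := by
      ext v; simp [Function.mem_support, (Real.exp_pos (t * l v)).ne']
    rw [hs]
    exact (integral_pos_iff_support_of_nonneg hfg_nn hfg_int).mp hfg_pos
  -- integrable abs variant
  have habs : ∀ a : ℝ, Integrable (fun v => Real.exp (a * l v) * |l v| * (f v * g v)) := by
    intro a
    refine (hF'int a).abs.congr (Eventually.of_forall fun v => ?_)
    show |Real.exp (a * l v) * l v * (f v * g v)| = _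
    rw [abs_mul, abs_mul, abs_of_nonneg (Real.exp_pos _).le, abs_of_nonneg (hfg_nn v)]
  -- derivative of W
  have hW' : ∀ t₀ : ℝ, HasDerivAt W (N t₀) t₀ := by
    intro t₀
    have key := hasDerivAt_integral_of_dominated_loc_of_deriv_le (μ := (volume : Measure ℝ))
      (F := fun t v => Real.exp (t * l v) * (f v * g v))
      (F' := fun t v => Real.exp (t * l v) * l v * (f v * g v))
      (x₀ := t₀)
      (bound := fun v => Real.exp ((t₀ + 1) * l v) * |l v| * (f v * g v)
        + Real.exp ((t₀ - 1) * l v) * |l v| * (f v * g v))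
      (s := Metric.ball t₀ 1) (Metric.ball_mem_nhds t₀ one_pos)
      (Eventually.of_forall fun x => (hFint x).aestronglyMeasurable)
      (hFint t₀) (hF'int t₀).aestronglyMeasurable
      ?_ ((habs (t₀ + 1)).add (habs (t₀ - 1)))
      ?_
    · exact key.2
    · refine Eventually.of_forall fun v => fun x hx => ?_
      have hxd : |x - t₀| < 1 := by simpa [Real.dist_eq] using hx
      have hexp : Real.exp (x * l v) ≤ Real.exp ((t₀ + 1) * l v) + Real.exp ((t₀ - 1) * l v) := by
        rcases le_or_gt 0 (l v) with hlv | hlv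
        · have : x * l v ≤ (t₀ + 1) * l v := by nlinarith [abs_lt.mp hxd]
          have := Real.exp_le_exp.mpr this
          linarith [(Real.exp_pos ((t₀ - 1) * l v)).le]
        · have : x * l v ≤ (t₀ - 1) * l v := by nlinarith [abs_lt.mp hxd]
          have := Real.exp_le_exp.mpr this
          linarith [(Real.exp_pos ((t₀ + 1) * l v)).le]
      have hnorm : ‖Real.exp (x * l v) * l v * (f v * g v)‖
          = Real.exp (x * l v) * |l v| * (f v * g v) := by
        rw [Real.norm_eq_abs, abs_mul, abs_mul, abs_of_nonneg (Real.exp_pos _).le,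
          abs_of_nonneg (hfg_nn v)]
      rw [hnorm]
      have hmul : Real.exp (x * l v) * |l v| * (f v * g v)
          ≤ (Real.exp ((t₀ + 1) * l v) + Real.exp ((t₀ - 1) * l v)) * |l v| * (f v * g v) := by
        have h1 : (0:ℝ) ≤ |l v| * (f v * g v) := mul_nonneg (abs_nonneg _) (hfg_nn v)
        calc Real.exp (x * l v) * |l v| * (f v * g v)
            = Real.exp (x * l v) * (|l v| * (f v * g v)) := by ring
          _ ≤ (Real.exp ((t₀ + 1) * l v) + Real.exp ((t₀ - 1) * l v)) * (|l v| * (f v * g v)) :=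
              mul_le_mul_of_nonneg_right hexp h1
          _ = _ := by ring
      calc Real.exp (x * l v) * |l v| * (f v * g v)
          ≤ (Real.exp ((t₀ + 1) * l v) + Real.exp ((t₀ - 1) * l v)) * |l v| * (f v * g v) := hmul
        _ = Real.exp ((t₀ + 1) * l v) * |l v| * (f v * g v)
            + Real.exp ((t₀ - 1) * l v) * |l v| * (f v * g v) := by ring
    · refine Eventually.of_forall fun v => fun x _ => ?_
      have h1 : HasDerivAt (fun x : ℝ => Real.exp (x * l v)) (Real.exp (x * l v) * l v) x :=
        (hasDerivAt_mul_const (l v)).exp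
      have h2 := h1.mul_const (f v * g v)
      simpa [mul_assoc, mul_comm, mul_left_comm] using h2
  -- V equals N / W
  have hNV : ∀ t, N t / W t = V t := by
    intro t
    rw [hV t, hN, hW]
    congr 1
    · apply integral_congr_ae; filter_upwards with u; ring
    · apply integral_congr_ae; filter_upwards with u; ring
  -- derivative of φ
  set φ : ℝ → ℝ := fun t => Real.log (W t) - r * t with hφ
  have hφ' : ∀ t, HasDerivAt φ (V t - r) t := by
    intro t
    have h1 : HasDerivAt (fun t => Real.log (W t)) (N t / W t) t :=
      (hW' t).log (hW_pos t).ne'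
    have h2 : HasDerivAt (fun t : ℝ => r * t) r t := by
      simpa using (hasDerivAt_id t).const_mul r
    have := h1.sub h2
    rwa [hNV t] at this
  -- the key claim: φ gets arbitrarily small
  have hφ_small : ∀ M : ℝ, ∃ s : ℝ, φ s ≤ M := by
    rcases hout with h1 | h2
    · -- v₁ < r
      have hne_bot : v₁ ≠ ⊥ := by
        rw [hv₁]
        exact ((EReal.bot_lt_coe (V 0)).trans_le (le_iSup (fun t : ℝ => ((V t : EReal))) 0)).ne'
      have hne_top : v₁ ≠ ⊤ := (h1.trans_le le_top).ne
      set c : ℝ := v₁.toReal with hc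
      have hv₁c : v₁ = (c : EReal) := (EReal.coe_toReal hne_top hne_bot).symm
      have hVc : ∀ t, V t ≤ c := by
        intro t
        have := le_iSup (fun t : ℝ => ((V t : EReal))) t
        rw [← hv₁, hv₁c] at this
        exact_mod_cast this
      have hcr : c < r := by rw [hv₁c] at h1; exact_mod_cast h1
      set δ : ℝ := r - c with hδdef
      have hδ : 0 < δ := by simp [hδdef]; linarith
      set ψ : ℝ → ℝ := fun t => φ t + δ * t with hψ
      have hψ' : ∀ t, HasDerivAt ψ (V t - c) t := by
        intro t
        have h2 : HasDerivAt (fun t : ℝ => δ * t) δ t := by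
          simpa using (hasDerivAt_id t).const_mul δ
        have := (hφ' t).add h2
        rw [show V t - c = V t - r + δ by rw [hδdef]; ring]; exact this
      have hanti : Antitone ψ :=
        antitone_of_deriv_nonpos (fun t => (hψ' t).differentiableAt)
          (fun t => by rw [(hψ' t).deriv]; linarith [hVc t])
      intro M
      refine ⟨max 0 ((φ 0 - M) / δ), ?_⟩
      have hs0 : (0:ℝ) ≤ max 0 ((φ 0 - M) / δ) := le_max_left _ _
      have := hanti hs0
      have hδs : φ 0 - M ≤ δ * max 0 ((φ 0 - M) / δ) := by
        have := le_max_right 0 ((φ 0 - M) / δ)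
        calc φ 0 - M = δ * ((φ 0 - M) / δ) := by field_simp
          _ ≤ δ * max 0 ((φ 0 - M) / δ) := by
              exact mul_le_mul_of_nonneg_left this hδ.le
      simp only [hψ] at this
      linarith
    · -- r < v₀
      have hne_top : v₀ ≠ ⊤ := by
        rw [hv₀]
        exact ((iInf_le (fun t : ℝ => ((V t : EReal))) 0).trans_lt (EReal.coe_lt_top (V 0))).ne
      have hne_bot : v₀ ≠ ⊥ := ((EReal.bot_lt_coe r).trans h2).ne'
      set c : ℝ := v₀.toReal with hc
      have hv₀c : v₀ = (c : EReal) := (EReal.coe_toReal hne_top hne_bot).symm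
      have hVc : ∀ t, c ≤ V t := by
        intro t
        have := iInf_le (fun t : ℝ => ((V t : EReal))) t
        rw [← hv₀, hv₀c] at this
        exact_mod_cast this
      have hcr : r < c := by rw [hv₀c] at h2; exact_mod_cast h2
      set δ : ℝ := c - r with hδdef
      have hδ : 0 < δ := by simp [hδdef]; linarith
      set ψ : ℝ → ℝ := fun t => φ t - δ * t with hψ
      have hψ' : ∀ t, HasDerivAt ψ (V t - c) t := by
        intro t
        have h2 : HasDerivAt (fun t : ℝ => δ * t) δ t := by
          simpa using (hasDerivAt_id t).const_mul δ
        have := (hφ' t).sub h2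
        rw [show V t - c = V t - r - δ by rw [hδdef]; ring]; exact this
      have hmono : Monotone ψ :=
        monotone_of_deriv_nonneg (fun t => (hψ' t).differentiableAt)
          (fun t => by rw [(hψ' t).deriv]; linarith [hVc t])
      intro M
      refine ⟨min 0 ((M - φ 0) / δ), ?_⟩
      have hs0 : min 0 ((M - φ 0) / δ) ≤ (0:ℝ) := min_le_left _ _
      have := hmono hs0
      have hδs : δ * min 0 ((M - φ 0) / δ) ≤ M - φ 0 := by
        have := min_le_right 0 ((M - φ 0) / δ)
        calc δ * min 0 ((M - φ 0) / δ) ≤ δ * ((M - φ 0) / δ) :=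
              mul_le_mul_of_nonneg_left this hδ.le
          _ = M - φ 0 := by field_simp
      simp only [hψ] at this
      linarith
  -- conclude
  rw [iSup_eq_top]
  intro b hb
  rcases eq_or_ne b ⊥ with rfl | hbne
  · exact ⟨(0, 0), EReal.bot_lt_coe _⟩
  have hbM : b = ((b.toReal : ℝ) : EReal) := (EReal.coe_toReal hb.ne hbne).symm
  set M₀ : ℝ := b.toReal with hM₀
  set M' : ℝ := (B - 1 - M₀) / lam₁ - 1 with hM'def
  obtain ⟨s, hφs⟩ := hφ_small M'
  set t1 : ℝ := -Real.log (W s) with ht1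
  refine ⟨(t1, s), ?_⟩
  have hsplit : (∫ v, (Real.exp (t1 + s * l v) - 1) * f v * g v)
      = Real.exp t1 * W s - B := by
    have h1 : (fun v => (Real.exp (t1 + s * l v) - 1) * f v * g v)
        = fun v => Real.exp t1 * (Real.exp (s * l v) * (f v * g v)) - f v * g v := by
      funext v; rw [Real.exp_add]; ring
    rw [h1, integral_sub ((hFint s).const_mul (Real.exp t1)) hfg_int, integral_const_mul]
  have hexp1 : Real.exp t1 * W s = 1 := by
    rw [ht1, Real.exp_neg, Real.exp_log (hW_pos s)]
    exact inv_mul_cancel₀ (hW_pos s).ne'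
  have hlr : lam₁ * r = lam₂ := by
    rw [hr]; field_simp
  have hval : lam₁ * t1 + lam₂ * s - (∫ v, (Real.exp (t1 + s * l v) - 1) * f v * g v)
      = -lam₁ * φ s - 1 + B := by
    rw [hsplit, hexp1, hφ, ht1]
    have : lam₂ * s = lam₁ * (r * s) := by rw [← hlr]; ring
    rw [this]; ring
  rw [hbM]
  have hM'mul : lam₁ * M' = (B - 1 - M₀) - lam₁ := by
    rw [hM'def]; field_simp
  have hineq : lam₁ * φ s ≤ lam₁ * M' := mul_le_mul_of_nonneg_left hφs hlam₁.le
  have hfin : M₀ < lam₁ * t1 + lam₂ * s - (∫ v, (Real.exp (t1 + s * l v) - 1) * f v * g v) := by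
    rw [hval]; linarith
  exact_mod_cast hfin
end

section
/- In the uniform-kernel setting, under assumption (A3), for v_0(x) < λ < v_1(x) the function γ_x(λ) = ∫ (1 − exp{V_x^{-1}(λ)(l(v) − λ)}) f_v(x) g(v) dv is differentiable with first derivative γ_x'(λ) = V_x^{-1}(λ) exp{−λ V_x^{-1}(λ)} ∫ e^{V_x^{-1}(λ) l(v)} f_v(x) g(v) dv and second derivative γ_x''(λ) = (1/V_x'(V_x^{-1}(λ)) − (V_x^{-1}(λ))²) exp{−λ V_x^{-1}(λ)} ∫ e^{V_x^{-1}(λ) l(v)} f_v(x) g(v) dv. -/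
set_option autoImplicit false

open MeasureTheory Filter Set Topology

lemma exp_bound_aux {t x c : ℝ} (hx : x ∈ Metric.ball t 1) :
    Real.exp (x * c) ≤ Real.exp ((t - 1) * c) + Real.exp ((t + 1) * c) := by
  have hx' := abs_lt.mp (by simpa [Real.dist_eq] using hx)
  rcases le_or_gt 0 c with hc | hc
  · have h1 : Real.exp (x * c) ≤ Real.exp ((t + 1) * c) :=
      Real.exp_le_exp.mpr (mul_le_mul_of_nonneg_right (by linarith [hx'.2]) hc)
    linarith [Real.exp_pos ((t - 1) * c)]
  · have h1 : Real.exp (x * c) ≤ Real.exp ((t - 1) * c) :=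
      Real.exp_le_exp.mpr (by nlinarith [hx'.1])
    linarith [Real.exp_pos ((t + 1) * c)]

lemma abs_exp_mul_le {t x c : ℝ} (r : ℝ) (hx : x ∈ Metric.ball t 1) :
    Real.exp (x * c) * |r| ≤ |Real.exp ((t - 1) * c) * r| + |Real.exp ((t + 1) * c) * r| := by
  have hb := exp_bound_aux (c := c) hx
  rw [abs_mul, abs_mul, abs_of_pos (Real.exp_pos _), abs_of_pos (Real.exp_pos _)]
  nlinarith [abs_nonneg r, Real.exp_pos ((t - 1) * c), Real.exp_pos ((t + 1) * c)]

lemma hasDerivAt_integral_exp (l q : ℝ → ℝ) (hl : Measurable l)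
    (hq : AEStronglyMeasurable q volume)
    (hint : ∀ a : ℝ, Integrable (fun v => Real.exp (a * l v) * q v))
    (hint2 : ∀ a : ℝ, Integrable (fun v => Real.exp (a * l v) * (q v * l v))) (t : ℝ) :
    HasDerivAt (fun t => ∫ v, Real.exp (t * l v) * q v)
      (∫ v, Real.exp (t * l v) * (q v * l v)) t := by
  have hql : AEStronglyMeasurable (fun v => q v * l v) volume :=
    hq.mul hl.aestronglyMeasurable
  have meas : ∀ x : ℝ, AEStronglyMeasurable (fun v => Real.exp (x * l v) * q v) volume :=
    fun x => ((Real.measurable_exp.comp (hl.const_mul x)).aestronglyMeasurable).mul hq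
  have measF' : AEStronglyMeasurable (fun v => Real.exp (t * l v) * (q v * l v)) volume :=
    ((Real.measurable_exp.comp (hl.const_mul t)).aestronglyMeasurable).mul hql
  have hbound : Integrable (fun v =>
      |Real.exp ((t - 1) * l v) * (q v * l v)| + |Real.exp ((t + 1) * l v) * (q v * l v)|) :=
    (hint2 (t - 1)).abs.add (hint2 (t + 1)).abs
  refine (hasDerivAt_integral_of_dominated_loc_of_deriv_le (s := Metric.ball t 1)
    (F := fun x v => Real.exp (x * l v) * q v)
    (F' := fun x v => Real.exp (x * l v) * (q v * l v))
    (bound := fun v =>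
      |Real.exp ((t - 1) * l v) * (q v * l v)| + |Real.exp ((t + 1) * l v) * (q v * l v)|)
    (Metric.ball_mem_nhds t one_pos) (Eventually.of_forall meas) (hint t) measF' ?_ hbound ?_).2
  · refine Eventually.of_forall fun v x hx => ?_
    rw [Real.norm_eq_abs, abs_mul, abs_of_pos (Real.exp_pos _)]
    exact abs_exp_mul_le _ hx
  · refine Eventually.of_forall fun v x hx => ?_
    show HasDerivAt (fun x => Real.exp (x * l v) * q v) (Real.exp (x * l v) * (q v * l v)) x
    have h : HasDerivAt (fun y : ℝ => Real.exp (y * l v) * q v)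
        (Real.exp (x * l v) * l v * q v) x :=
      ((hasDerivAt_mul_const (l v)).exp).mul_const (q v)
    have heq : Real.exp (x * l v) * (q v * l v) = Real.exp (x * l v) * l v * q v := by ring
    rw [heq]; exact h

lemma continuousAt_integral_exp (l q : ℝ → ℝ) (hl : Measurable l)
    (hq : AEStronglyMeasurable q volume)
    (hint : ∀ a : ℝ, Integrable (fun v => Real.exp (a * l v) * q v)) (t : ℝ) :
    ContinuousAt (fun t => ∫ v, Real.exp (t * l v) * q v) t := by
  have meas : ∀ x : ℝ, AEStronglyMeasurable (fun v => Real.exp (x * l v) * q v) volume :=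
    fun x => ((Real.measurable_exp.comp (hl.const_mul x)).aestronglyMeasurable).mul hq
  refine continuousAt_of_dominated (Eventually.of_forall meas) ?_
    ((hint (t - 1)).abs.add (hint (t + 1)).abs) ?_
  · filter_upwards [Metric.ball_mem_nhds t one_pos] with x hx
    refine Eventually.of_forall fun v => ?_
    rw [Real.norm_eq_abs, abs_mul, abs_of_pos (Real.exp_pos _)]
    exact abs_exp_mul_le _ hx
  · exact Eventually.of_forall fun v =>
      ((Real.continuous_exp.comp (continuous_id.mul continuous_const)).mul
        continuous_const).continuousAt
theorem gamma_derivatives_uniform_kernel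
    (l : ℝ → ℝ) (hl : Measurable l)
    (g : ℝ → ℝ) (hg_nonneg : ∀ v, 0 ≤ g v) (hg_prob : ∫ v, g v = 1)
    (f : ℝ → ℝ) (hf_nonneg : ∀ v, 0 ≤ f v)
    (hfg_pos : 0 < ∫ v, f v * g v)
    -- (A3)
    (hA3i : ∀ a b : ℝ, Integrable (fun v => (Real.exp (a + b * l v) - 1) * f v * g v))
    (hA3ii : ∀ a : ℝ, Integrable (fun v => Real.exp (a * l v) * f v * g v))
    (hA3iii : ∀ a : ℝ, Integrable (fun v => Real.exp (a * l v) * f v * g v * l v))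
    (hA3iv : ∀ a : ℝ, Integrable (fun v => Real.exp (a * l v) * f v * g v * (l v) ^ 2))
    -- V_x, its generalized inverse, and the bounds v₀(x), v₁(x)
    (V : ℝ → ℝ)
    (hV : ∀ t, V t = (∫ u, Real.exp (t * l u) * l u * f u * g u) /
      (∫ v, Real.exp (t * l v) * f v * g v))
    (Vinv : ℝ → ℝ) (hVinv : ∀ t, Vinv t = sInf {s | t ≤ V s})
    (v₀ v₁ : EReal) (hv₀ : v₀ = ⨅ t : ℝ, (V t : EReal)) (hv₁ : v₁ = ⨆ t : ℝ, (V t : EReal))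
    -- the explicit rate function of the uniform-kernel case
    (γ : ℝ → ℝ)
    (hγ : ∀ lam : ℝ, γ lam = ∫ v, (1 - Real.exp (Vinv lam * (l v - lam))) * f v * g v)
    (lam : ℝ) (hlam₀ : v₀ < (lam : EReal)) (hlam₁ : (lam : EReal) < v₁)
    -- V_x is strictly increasing near Vinv lam, with positive derivative there
    (hVstrict : ∃ ε > (0:ℝ), StrictMonoOn V (Ioo (Vinv lam - ε) (Vinv lam + ε)))
    (hV'pos : 0 < deriv V (Vinv lam)) :
    HasDerivAt γ
      (Vinv lam * Real.exp (-(lam * Vinv lam)) *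
        ∫ v, Real.exp (Vinv lam * l v) * f v * g v) lam ∧
    HasDerivAt (deriv γ)
      ((1 / deriv V (Vinv lam) - (Vinv lam) ^ 2) * Real.exp (-(lam * Vinv lam)) *
        ∫ v, Real.exp (Vinv lam * l v) * f v * g v) lam := by
  obtain ⟨ε, hε, hmono⟩ := hVstrict
  -- helper conversions
  have intext : ∀ (F G : ℝ → ℝ), (∀ v, F v = G v) → (∫ v, F v) = ∫ v, G v :=
    fun F G h => integral_congr_ae (Eventually.of_forall h)
  have intgr : ∀ (F G : ℝ → ℝ), (∀ v, F v = G v) → Integrable F → Integrable G :=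
    fun F G h hF => hF.congr (Eventually.of_forall h)
  -- basic objects
  set A : ℝ → ℝ := fun t => ∫ v, Real.exp (t * l v) * (f v * g v) with hA
  set B : ℝ → ℝ := fun t => ∫ v, Real.exp (t * l v) * ((f v * g v) * l v) with hB
  set C : ℝ → ℝ := fun t => ∫ v, Real.exp (t * l v) * ((f v * g v) * (l v) ^ 2) with hC
  have hw0 : ∀ v, (0:ℝ) ≤ f v * g v := fun v => mul_nonneg (hf_nonneg v) (hg_nonneg v)
  have hwint : Integrable (fun v => f v * g v) :=
    intgr _ _ (fun v => by simp) (hA3ii 0)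
  have hwmeas : AEStronglyMeasurable (fun v => f v * g v) volume := hwint.aestronglyMeasurable
  have hwlmeas : AEStronglyMeasurable (fun v => (f v * g v) * l v) volume :=
    hwmeas.mul hl.aestronglyMeasurable
  have hwl2meas : AEStronglyMeasurable (fun v => (f v * g v) * (l v) ^ 2) volume :=
    hwmeas.mul (hl.pow_const 2).aestronglyMeasurable
  -- integrabilities
  have hintA : ∀ a : ℝ, Integrable (fun v => Real.exp (a * l v) * (f v * g v)) :=
    fun a => intgr _ _ (fun v => by ring) (hA3ii a)
  have hintB : ∀ a : ℝ, Integrable (fun v => Real.exp (a * l v) * ((f v * g v) * l v)) :=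
    fun a => intgr _ _ (fun v => by ring) (hA3iii a)
  have hintC : ∀ a : ℝ, Integrable (fun v => Real.exp (a * l v) * ((f v * g v) * (l v) ^ 2)) :=
    fun a => intgr _ _ (fun v => by ring) (hA3iv a)
  have hintBl : ∀ a : ℝ,
      Integrable (fun v => Real.exp (a * l v) * (((f v * g v) * l v) * l v)) :=
    fun a => intgr _ _ (fun v => by ring) (hA3iv a)
  -- derivatives of A and B, continuity of C
  have hA' : ∀ t, HasDerivAt A (B t) t := fun t =>
    hasDerivAt_integral_exp l (fun v => f v * g v) hl hwmeas hintA hintB t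
  have hB' : ∀ t, HasDerivAt B (C t) t := fun t => by
    have h := hasDerivAt_integral_exp l (fun v => (f v * g v) * l v) hl hwlmeas hintB hintBl t
    have heq : C t = ∫ v, Real.exp (t * l v) * (((f v * g v) * l v) * l v) := by
      simp only [hC]; exact intext _ _ fun v => by ring
    rw [heq]; exact h
  have hCcont : ∀ t, ContinuousAt C t := fun t =>
    continuousAt_integral_exp l (fun v => (f v * g v) * (l v) ^ 2) hl hwl2meas hintC t
  -- positivity of A
  have hwpos : 0 < volume (Function.support fun v => f v * g v) := by
    rw [← integral_pos_iff_support_of_nonneg hw0 hwint]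
    exact hfg_pos
  have hApos : ∀ t, 0 < A t := fun t => by
    have hnn : 0 ≤ fun v => Real.exp (t * l v) * (f v * g v) :=
      fun v => mul_nonneg (Real.exp_pos _).le (hw0 v)
    rw [hA]
    rw [integral_pos_iff_support_of_nonneg hnn (hintA t)]
    have hsupp : (Function.support fun v => Real.exp (t * l v) * (f v * g v)) =
        Function.support fun v => f v * g v := by
      ext v
      simp [Function.mem_support, Real.exp_ne_zero]
    rw [hsupp]; exact hwpos
  -- V = B / A and its derivative
  have hVeq : ∀ t, V t = B t / A t := fun t => by
    rw [hV t, hB, hA]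
    congr 1
    · exact intext _ _ fun u => by ring
    · exact intext _ _ fun v => by ring
  have hV' : ∀ t, HasDerivAt V ((C t * A t - B t ^ 2) / A t ^ 2) t := fun t => by
    have h := (hB' t).div (hA' t) (hApos t).ne'
    have hfe : V = fun u => B u / A u := funext hVeq
    rw [hfe]
    have heq : (C t * A t - B t ^ 2) / A t ^ 2 = (C t * A t - B t * B t) / A t ^ 2 := by ring
    rw [heq]; exact h
  have hderiveq : ∀ t, deriv V t = (C t * A t - B t ^ 2) / A t ^ 2 :=
    fun t => (hV' t).deriv
  -- Cauchy-Schwarz : B t ^ 2 ≤ A t * C t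
  have hCS : ∀ t, B t ^ 2 ≤ A t * C t := fun t => by
    have key : ∀ x : ℝ, 0 ≤ A t * (x * x) + (2 * B t) * x + C t := by
      intro x
      have hnn : 0 ≤ ∫ v, (x + l v) ^ 2 * (Real.exp (t * l v) * (f v * g v)) :=
        integral_nonneg fun v => mul_nonneg (sq_nonneg _)
          (mul_nonneg (Real.exp_pos _).le (hw0 v))
      have h1 : ∀ v, (x + l v) ^ 2 * (Real.exp (t * l v) * (f v * g v)) =
          (x * x) * (Real.exp (t * l v) * (f v * g v)) +
            (2 * x) * (Real.exp (t * l v) * ((f v * g v) * l v)) +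
            Real.exp (t * l v) * ((f v * g v) * (l v) ^ 2) := fun v => by ring
      rw [intext _ _ h1] at hnn
      have i1 : Integrable (fun v => (x * x) * (Real.exp (t * l v) * (f v * g v))) :=
        (hintA t).const_mul (x * x)
      have i2 : Integrable
          (fun v => (2 * x) * (Real.exp (t * l v) * ((f v * g v) * l v))) :=
        (hintB t).const_mul (2 * x)
      have i12 : Integrable (fun v => (x * x) * (Real.exp (t * l v) * (f v * g v)) +
          (2 * x) * (Real.exp (t * l v) * ((f v * g v) * l v))) := i1.add i2
      rw [integral_add i12 (hintC t), integral_add i1 i2,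
        integral_const_mul, integral_const_mul] at hnn
      simp only [hA, hB, hC]
      linarith
    have hd := discrim_le_zero key
    rw [discrim] at hd
    nlinarith
  -- V is monotone and continuous
  have hVdiff : Differentiable ℝ V := fun t => (hV' t).differentiableAt
  have hderivnn : ∀ t, 0 ≤ deriv V t := fun t => by
    rw [hderiveq t]
    apply div_nonneg _ (sq_nonneg _)
    nlinarith [hCS t]
  have hMono : Monotone V := monotone_of_deriv_nonneg hVdiff hderivnn
  have hVcont : Continuous V := hVdiff.continuous
  -- lam is strictly between inf and sup of V
  obtain ⟨t₁, ht₁⟩ : ∃ t, V t < lam := by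
    rw [hv₀] at hlam₀
    obtain ⟨t, ht⟩ := iInf_lt_iff.mp hlam₀
    exact ⟨t, by exact_mod_cast ht⟩
  obtain ⟨t₂, ht₂⟩ : ∃ t, lam < V t := by
    rw [hv₁] at hlam₁
    obtain ⟨t, ht⟩ := lt_iSup_iff.mp hlam₁
    exact ⟨t, by exact_mod_cast ht⟩
  -- V (Vinv lam) = lam
  have hSne : {s | lam ≤ V s}.Nonempty := ⟨t₂, ht₂.le⟩
  have hSbdd : BddBelow {s | lam ≤ V s} :=
    ⟨t₁, fun s hs => le_of_not_gt fun h => not_lt.mpr (hs.trans (hMono h.le)) ht₁⟩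
  have hSclosed : IsClosed {s | lam ≤ V s} := isClosed_le continuous_const hVcont
  have hs₀mem : lam ≤ V (Vinv lam) := by
    have : Vinv lam ∈ {s | lam ≤ V s} := by
      rw [hVinv]; exact hSclosed.csInf_mem hSne hSbdd
    exact this
  have hVs₀le : V (Vinv lam) ≤ lam := by
    by_contra h
    push_neg at h
    have hnb : {s | lam < V s} ∈ 𝓝 (Vinv lam) :=
      (isOpen_lt continuous_const hVcont).mem_nhds h
    obtain ⟨δ, hδ, hball⟩ := Metric.mem_nhds_iff.mp hnb
    have hmem : Vinv lam - δ / 2 ∈ {s | lam ≤ V s} := by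
      have hmemball : Vinv lam - δ / 2 ∈ Metric.ball (Vinv lam) δ := by
        rw [Metric.mem_ball, Real.dist_eq, show Vinv lam - δ / 2 - Vinv lam = -(δ / 2) by ring,
          abs_neg, abs_of_nonneg (by linarith)]
        linarith
      have h' : lam < V (Vinv lam - δ / 2) := hball hmemball
      exact h'.le
    have hle : Vinv lam ≤ Vinv lam - δ / 2 := by
      conv_lhs => rw [hVinv]
      exact csInf_le hSbdd hmem
    linarith
  have hVs₀ : V (Vinv lam) = lam := le_antisymm hVs₀le hs₀mem
  -- KEY : behaviour of Vinv around points where V crosses levels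
  have KEY : ∀ s' δ' : ℝ, 0 < δ' → ∀ μ ∈ Ioo (V (s' - δ')) (V (s' + δ')),
      Vinv μ ∈ Icc (s' - δ') (s' + δ') ∧ V (Vinv μ) = μ := by
    intro s' δ' hδ'pos μ hμ
    obtain ⟨c, hc, hVc⟩ :=
      intermediate_value_Icc (by linarith : s' - δ' ≤ s' + δ') hVcont.continuousOn
        (⟨hμ.1.le, hμ.2.le⟩ : μ ∈ Icc (V (s' - δ')) (V (s' + δ')))
    have hne : {s | μ ≤ V s}.Nonempty := ⟨c, hVc.ge⟩
    have hlb : ∀ s ∈ {s | μ ≤ V s}, s' - δ' ≤ s := by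
      intro s hs
      by_contra h
      push_neg at h
      exact not_lt.mpr (hs.trans (hMono h.le)) hμ.1
    have hbdd : BddBelow {s | μ ≤ V s} := ⟨s' - δ', hlb⟩
    have h1 : s' - δ' ≤ Vinv μ := by rw [hVinv]; exact le_csInf hne hlb
    have h2 : Vinv μ ≤ c := by rw [hVinv]; exact csInf_le hbdd hVc.ge
    have hmem : μ ≤ V (Vinv μ) := by
      have : Vinv μ ∈ {s | μ ≤ V s} := by
        rw [hVinv]; exact (isClosed_le continuous_const hVcont).csInf_mem hne hbdd
      exact this
    exact ⟨⟨h1, h2.trans hc.2⟩, le_antisymm ((hMono h2).trans_eq hVc) hmem⟩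
  -- choose a radius ρ where deriv V is positive
  have hderivVcont : ContinuousAt (fun t => (C t * A t - B t ^ 2) / A t ^ 2) (Vinv lam) := by
    have hAct : Continuous A := continuous_iff_continuousAt.mpr fun t => (hA' t).continuousAt
    have hBct : Continuous B := continuous_iff_continuousAt.mpr fun t => (hB' t).continuousAt
    exact (((hCcont (Vinv lam)).mul hAct.continuousAt).sub
      ((hBct.continuousAt).pow 2)).div ((hAct.continuousAt).pow 2)
      (pow_ne_zero 2 (hApos (Vinv lam)).ne')
  have hev : ∀ᶠ t in 𝓝 (Vinv lam), 0 < deriv V t := by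
    have h0 : 0 < (C (Vinv lam) * A (Vinv lam) - B (Vinv lam) ^ 2) / A (Vinv lam) ^ 2 := by
      rw [← hderiveq]; exact hV'pos
    filter_upwards [hderivVcont.eventually (eventually_gt_nhds h0)] with t ht
    rw [hderiveq t]; exact ht
  obtain ⟨ρ₀, hρ₀pos, hρ₀⟩ := Metric.eventually_nhds_iff.mp hev
  set ρ : ℝ := min (ρ₀ / 2) (ε / 4) with hρ
  have hρpos : 0 < ρ := lt_min (by linarith) (by linarith)
  have hρle : ρ ≤ ε / 4 := min_le_right _ _
  have hρlt : ρ < ρ₀ := lt_of_le_of_lt (min_le_left _ _) (by linarith)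
  have hderivpos : ∀ u ∈ Icc (Vinv lam - ρ) (Vinv lam + ρ), 0 < deriv V u := by
    intro u hu
    apply hρ₀
    rw [Real.dist_eq]
    have : |u - Vinv lam| ≤ ρ := abs_le.mpr ⟨by linarith [hu.1], by linarith [hu.2]⟩
    linarith
  -- the open neighbourhood J of lam
  have hlamJ : lam ∈ Ioo (V (Vinv lam - ρ)) (V (Vinv lam + ρ)) := by
    constructor
    · have h := hmono (Set.mem_Ioo.mpr ⟨by linarith, by linarith⟩)
        (Set.mem_Ioo.mpr ⟨by linarith, by linarith⟩) (by linarith : Vinv lam - ρ < Vinv lam)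
      rwa [hVs₀] at h
    · have h := hmono (Set.mem_Ioo.mpr ⟨by linarith, by linarith⟩)
        (Set.mem_Ioo.mpr ⟨by linarith, by linarith⟩) (by linarith : Vinv lam < Vinv lam + ρ)
      rwa [hVs₀] at h
  -- continuity of Vinv on J
  have hVinvcont : ∀ μ ∈ Ioo (V (Vinv lam - ρ)) (V (Vinv lam + ρ)), ContinuousAt Vinv μ := by
    intro μ hμ
    obtain ⟨hmem, hVVinv⟩ := KEY (Vinv lam) ρ hρpos μ hμ
    rw [Metric.continuousAt_iff]
    intro δ hδ
    set δ' : ℝ := min (δ / 2) ρ with hδ'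
    have hδ'pos : 0 < δ' := lt_min (by linarith) hρpos
    have hδ'ρ : δ' ≤ ρ := min_le_right _ _
    have hmemmid : Vinv μ ∈ Ioo (Vinv lam - ε) (Vinv lam + ε) :=
      ⟨by linarith [hmem.1], by linarith [hmem.2]⟩
    have hmem1 : Vinv μ - δ' ∈ Ioo (Vinv lam - ε) (Vinv lam + ε) :=
      ⟨by linarith [hmem.1], by linarith [hmem.2]⟩
    have hmem2 : Vinv μ + δ' ∈ Ioo (Vinv lam - ε) (Vinv lam + ε) :=
      ⟨by linarith [hmem.1], by linarith [hmem.2]⟩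
    have hlt1 : V (Vinv μ - δ') < μ := by
      have h := hmono hmem1 hmemmid (by linarith : Vinv μ - δ' < Vinv μ)
      rwa [hVVinv] at h
    have hlt2 : μ < V (Vinv μ + δ') := by
      have h := hmono hmemmid hmem2 (by linarith : Vinv μ < Vinv μ + δ')
      rwa [hVVinv] at h
    refine ⟨min (μ - V (Vinv μ - δ')) (V (Vinv μ + δ') - μ),
      lt_min (by linarith) (by linarith), ?_⟩
    intro μ' hdist
    rw [Real.dist_eq] at hdist
    have habs := abs_lt.mp hdist
    have hL := min_le_left (μ - V (Vinv μ - δ')) (V (Vinv μ + δ') - μ)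
    have hR := min_le_right (μ - V (Vinv μ - δ')) (V (Vinv μ + δ') - μ)
    have hμ'mem : μ' ∈ Ioo (V (Vinv μ - δ')) (V (Vinv μ + δ')) :=
      ⟨by linarith [habs.1], by linarith [habs.2]⟩
    obtain ⟨hmem', _⟩ := KEY (Vinv μ) δ' hδ'pos μ' hμ'mem
    rw [Real.dist_eq]
    have h1 := hmem'.1
    have h2 := hmem'.2
    have hδ'δ : δ' ≤ δ / 2 := min_le_left _ _
    have habs2 : |Vinv μ' - Vinv μ| ≤ δ' := abs_le.mpr ⟨by linarith, by linarith⟩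
    exact lt_of_le_of_lt habs2 (by linarith)
  -- differentiability of Vinv on J
  have hVinvderiv : ∀ μ ∈ Ioo (V (Vinv lam - ρ)) (V (Vinv lam + ρ)),
      HasDerivAt Vinv (deriv V (Vinv μ))⁻¹ μ := by
    intro μ hμ
    obtain ⟨hmem, hVVinv⟩ := KEY (Vinv lam) ρ hρpos μ hμ
    have hd : HasDerivAt V (deriv V (Vinv μ)) (Vinv μ) := (hVdiff (Vinv μ)).hasDerivAt
    refine HasDerivAt.of_local_left_inverse (hVinvcont μ hμ) hd
      (ne_of_gt (hderivpos _ hmem)) ?_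
    filter_upwards [isOpen_Ioo.mem_nhds hμ] with μ' hμ'
    exact (KEY (Vinv lam) ρ hρpos μ' hμ').2
  -- closed form for γ
  have hγeq : γ = fun μ => (∫ v, f v * g v) - Real.exp (-(μ * Vinv μ)) * A (Vinv μ) := by
    funext μ
    rw [hγ μ]
    have h1 : ∀ v, (1 - Real.exp (Vinv μ * (l v - μ))) * f v * g v
        = f v * g v - Real.exp (-(μ * Vinv μ)) * (Real.exp (Vinv μ * l v) * (f v * g v)) := by
      intro v
      have hx : Real.exp (Vinv μ * (l v - μ)) =
          Real.exp (-(μ * Vinv μ)) * Real.exp (Vinv μ * l v) := by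
        rw [← Real.exp_add]; congr 1; ring
      rw [hx]; ring
    rw [intext _ _ h1, integral_sub hwint ((hintA (Vinv μ)).const_mul _),
      integral_const_mul]
  -- B (Vinv μ) = μ * A (Vinv μ) on J
  have hBA : ∀ μ ∈ Ioo (V (Vinv lam - ρ)) (V (Vinv lam + ρ)),
      B (Vinv μ) = μ * A (Vinv μ) := by
    intro μ hμ
    have hVVinv := (KEY (Vinv lam) ρ hρpos μ hμ).2
    rw [hVeq (Vinv μ)] at hVVinv
    field_simp [(hApos (Vinv μ)).ne'] at hVVinv
    linarith
  -- derivative of γ on J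
  have hγderiv : ∀ μ ∈ Ioo (V (Vinv lam - ρ)) (V (Vinv lam + ρ)),
      HasDerivAt γ (Vinv μ * Real.exp (-(μ * Vinv μ)) * A (Vinv μ)) μ := by
    intro μ hμ
    have hs' := hVinvderiv μ hμ
    have h1 : HasDerivAt (fun x : ℝ => -(x * Vinv x))
        (-(1 * Vinv μ + μ * (deriv V (Vinv μ))⁻¹)) μ := ((hasDerivAt_id μ).mul hs').neg
    have h2 := h1.exp
    have h3 : HasDerivAt (fun x : ℝ => A (Vinv x))
        (B (Vinv μ) * (deriv V (Vinv μ))⁻¹) μ := (hA' (Vinv μ)).comp μ hs'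
    have h4 := h2.mul h3
    have h5 := (hasDerivAt_const μ (∫ v, f v * g v)).sub h4
    rw [hγeq]
    have heq : Vinv μ * Real.exp (-(μ * Vinv μ)) * A (Vinv μ) =
        0 - (Real.exp (-(μ * Vinv μ)) * -(1 * Vinv μ + μ * (deriv V (Vinv μ))⁻¹) * A (Vinv μ) +
          Real.exp (-(μ * Vinv μ)) * (B (Vinv μ) * (deriv V (Vinv μ))⁻¹)) := by
      rw [hBA μ hμ]; ring
    rw [heq]
    exact h5
  constructor
  · have h := hγderiv lam hlamJ
    have heq : A (Vinv lam) = ∫ v, Real.exp (Vinv lam * l v) * f v * g v := by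
      simp only [hA]; exact intext _ _ fun v => by ring
    rw [← heq]
    exact h
  · have hJnhds : Ioo (V (Vinv lam - ρ)) (V (Vinv lam + ρ)) ∈ 𝓝 lam :=
      isOpen_Ioo.mem_nhds hlamJ
    have hderivγ : deriv γ =ᶠ[𝓝 lam]
        fun μ => Vinv μ * Real.exp (-(μ * Vinv μ)) * A (Vinv μ) := by
      filter_upwards [hJnhds] with μ hμ
      exact (hγderiv μ hμ).deriv
    have hs' := hVinvderiv lam hlamJ
    have h1 : HasDerivAt (fun x : ℝ => -(x * Vinv x))
        (-(1 * Vinv lam + lam * (deriv V (Vinv lam))⁻¹)) lam :=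
      ((hasDerivAt_id lam).mul hs').neg
    have h2 := h1.exp
    have h3 : HasDerivAt (fun x : ℝ => A (Vinv x))
        (B (Vinv lam) * (deriv V (Vinv lam))⁻¹) lam := (hA' (Vinv lam)).comp lam hs'
    have h6 := (hs'.mul h2).mul h3
    have hφ : HasDerivAt (fun μ => Vinv μ * Real.exp (-(μ * Vinv μ)) * A (Vinv μ))
        ((1 / deriv V (Vinv lam) - Vinv lam ^ 2) * Real.exp (-(lam * Vinv lam)) *
          ∫ v, Real.exp (Vinv lam * l v) * f v * g v) lam := by
      have heqA : A (Vinv lam) = ∫ v, Real.exp (Vinv lam * l v) * f v * g v := by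
        simp only [hA]; exact intext _ _ fun v => by ring
      have heq : (1 / deriv V (Vinv lam) - Vinv lam ^ 2) * Real.exp (-(lam * Vinv lam)) *
            (∫ v, Real.exp (Vinv lam * l v) * f v * g v) =
          ((deriv V (Vinv lam))⁻¹ * Real.exp (-(lam * Vinv lam)) +
            Vinv lam * (Real.exp (-(lam * Vinv lam)) *
              -(1 * Vinv lam + lam * (deriv V (Vinv lam))⁻¹))) * A (Vinv lam) +
            Vinv lam * Real.exp (-(lam * Vinv lam)) *
              (B (Vinv lam) * (deriv V (Vinv lam))⁻¹) := by
        rw [← heqA, hBA lam hlamJ, one_div]; ring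
      rw [heq]
      exact h6
    exact hφ.congr_of_eventuallyEq hderivγ
end

section
/- In the uniform-kernel setting, under assumption (A3), let Z denote a random variable with density f_v(x) g(v)/∫ f_u(x) g(u) du on ℝ, and assume E(l(Z)) = 0 and 0 < E(l²(Z)) < ∞. Then, as λ → 0, γ_x(λ) = (λ²/(2 E(l²(Z)))) · (∫ f_v(x) g(v) dv) · (1 + o(1)), where γ_x(λ) = ∫ (1 − exp{V_x^{-1}(λ)(l(v) − λ)}) f_v(x) g(v) dv for v_0(x) < λ < v_1(x). -/
set_option autoImplicit false

open MeasureTheory Filter Set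

set_option maxHeartbeats 1000000

open MeasureTheory Filter Set

private lemma exp_le_add' {a b t y : ℝ} (hat : a ≤ t) (htb : t ≤ b) :
    Real.exp (t * y) ≤ Real.exp (a * y) + Real.exp (b * y) := by
  rcases le_or_gt 0 y with hy | hy
  · have h : t * y ≤ b * y := mul_le_mul_of_nonneg_right htb hy
    have := Real.exp_le_exp.mpr h
    have := (Real.exp_pos (a * y)).le
    linarith
  · have h : t * y ≤ a * y := by nlinarith
    have := Real.exp_le_exp.mpr h
    have := (Real.exp_pos (b * y)).le
    linarith

section helpers

variable {l f g : ℝ → ℝ}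

private lemma hasDerivAt_MM (hf : ∀ v, 0 ≤ f v) (hg : ∀ v, 0 ≤ g v)
    (hA3ii : ∀ a : ℝ, Integrable (fun v => Real.exp (a * l v) * f v * g v))
    (hA3iii : ∀ a : ℝ, Integrable (fun v => Real.exp (a * l v) * f v * g v * l v))
    (t₀ : ℝ) :
    HasDerivAt (fun t => ∫ v, Real.exp (t * l v) * f v * g v)
      (∫ v, Real.exp (t₀ * l v) * f v * g v * l v) t₀ := by
  have habs : ∀ (a : ℝ) (v : ℝ), |Real.exp (a * l v) * f v * g v * l v|
      = Real.exp (a * l v) * (f v * g v * |l v|) := by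
    intro a v
    rw [abs_mul, abs_mul, abs_mul, abs_of_pos (Real.exp_pos _), abs_of_nonneg (hf v),
      abs_of_nonneg (hg v)]
    ring
  have h := hasDerivAt_integral_of_dominated_loc_of_deriv_le (μ := (volume : Measure ℝ))
    (F := fun t v => Real.exp (t * l v) * f v * g v)
    (F' := fun t v => Real.exp (t * l v) * f v * g v * l v)
    (bound := fun v => |Real.exp ((t₀ - 1) * l v) * f v * g v * l v| +
      |Real.exp ((t₀ + 1) * l v) * f v * g v * l v|)
    (x₀ := t₀) (Metric.ball_mem_nhds t₀ one_pos)
    (Eventually.of_forall fun x => (hA3ii x).aestronglyMeasurable)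
    (hA3ii t₀)
    (hA3iii t₀).aestronglyMeasurable
    ?_ (((hA3iii (t₀ - 1)).abs).add ((hA3iii (t₀ + 1)).abs)) ?_
  · exact h.2
  · refine Eventually.of_forall fun v x hx => ?_
    have hd := abs_sub_lt_iff.mp (by simpa [Real.dist_eq] using Metric.mem_ball.mp hx)
    have hx1 : t₀ - 1 ≤ x := by linarith [hd.2]
    have hx2 : x ≤ t₀ + 1 := by linarith [hd.1]
    show ‖Real.exp (x * l v) * f v * g v * l v‖
      ≤ |Real.exp ((t₀ - 1) * l v) * f v * g v * l v| + |Real.exp ((t₀ + 1) * l v) * f v * g v * l v|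
    rw [Real.norm_eq_abs, habs, habs, habs, ← add_mul]
    refine mul_le_mul_of_nonneg_right (exp_le_add' hx1 hx2) ?_
    exact mul_nonneg (mul_nonneg (hf v) (hg v)) (abs_nonneg _)
  · refine Eventually.of_forall fun v x hx => ?_
    have h1 : HasDerivAt (fun t : ℝ => t * l v) (l v) x := hasDerivAt_mul_const _
    have h2 := ((h1.exp).mul_const (f v)).mul_const (g v)
    exact h2.congr_deriv (by ring)

private lemma hasDerivAt_MM1 (hf : ∀ v, 0 ≤ f v) (hg : ∀ v, 0 ≤ g v)
    (hA3iii : ∀ a : ℝ, Integrable (fun v => Real.exp (a * l v) * f v * g v * l v))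
    (hA3iv : ∀ a : ℝ, Integrable (fun v => Real.exp (a * l v) * f v * g v * (l v) ^ 2))
    (t₀ : ℝ) :
    HasDerivAt (fun t => ∫ v, Real.exp (t * l v) * f v * g v * l v)
      (∫ v, Real.exp (t₀ * l v) * f v * g v * (l v) ^ 2) t₀ := by
  have h := hasDerivAt_integral_of_dominated_loc_of_deriv_le (μ := (volume : Measure ℝ))
    (F := fun t v => Real.exp (t * l v) * f v * g v * l v)
    (F' := fun t v => Real.exp (t * l v) * f v * g v * (l v) ^ 2)
    (bound := fun v => Real.exp ((t₀ - 1) * l v) * f v * g v * (l v) ^ 2 +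
      Real.exp ((t₀ + 1) * l v) * f v * g v * (l v) ^ 2)
    (x₀ := t₀) (Metric.ball_mem_nhds t₀ one_pos)
    (Eventually.of_forall fun x => (hA3iii x).aestronglyMeasurable)
    (hA3iii t₀)
    (hA3iv t₀).aestronglyMeasurable
    ?_ ((hA3iv (t₀ - 1)).add (hA3iv (t₀ + 1))) ?_
  · exact h.2
  · refine Eventually.of_forall fun v x hx => ?_
    have hd := abs_sub_lt_iff.mp (by simpa [Real.dist_eq] using Metric.mem_ball.mp hx)
    have hx1 : t₀ - 1 ≤ x := by linarith [hd.2]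
    have hx2 : x ≤ t₀ + 1 := by linarith [hd.1]
    have hn0 : (0:ℝ) ≤ f v * g v * (l v) ^ 2 :=
      mul_nonneg (mul_nonneg (hf v) (hg v)) (sq_nonneg _)
    have hnorm : ‖Real.exp (x * l v) * f v * g v * (l v) ^ 2‖
        = Real.exp (x * l v) * (f v * g v * (l v) ^ 2) := by
      rw [Real.norm_eq_abs, abs_of_nonneg (by nlinarith [Real.exp_pos (x * l v)])]
      ring
    show ‖Real.exp (x * l v) * f v * g v * (l v) ^ 2‖
      ≤ Real.exp ((t₀ - 1) * l v) * f v * g v * (l v) ^ 2 +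
        Real.exp ((t₀ + 1) * l v) * f v * g v * (l v) ^ 2
    rw [hnorm]
    calc Real.exp (x * l v) * (f v * g v * (l v) ^ 2)
        ≤ (Real.exp ((t₀ - 1) * l v) + Real.exp ((t₀ + 1) * l v)) * (f v * g v * (l v) ^ 2) :=
          mul_le_mul_of_nonneg_right (exp_le_add' hx1 hx2) hn0
      _ = Real.exp ((t₀ - 1) * l v) * f v * g v * (l v) ^ 2 +
          Real.exp ((t₀ + 1) * l v) * f v * g v * (l v) ^ 2 := by ring
  · refine Eventually.of_forall fun v x hx => ?_
    have h1 : HasDerivAt (fun t : ℝ => t * l v) (l v) x := hasDerivAt_mul_const _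
    have h2 := (((h1.exp).mul_const (f v)).mul_const (g v)).mul_const (l v)
    exact h2.congr_deriv (by ring)

private lemma contMM2
    (hf : ∀ v, 0 ≤ f v) (hg : ∀ v, 0 ≤ g v)
    (hA3iv : ∀ a : ℝ, Integrable (fun v => Real.exp (a * l v) * f v * g v * (l v) ^ 2)) :
    ContinuousAt (fun t : ℝ => ∫ v, Real.exp (t * l v) * f v * g v * (l v) ^ 2) 0 := by
  refine continuousAt_of_dominated (bound := fun v =>
      Real.exp ((-1 : ℝ) * l v) * f v * g v * (l v) ^ 2 +
      Real.exp ((1 : ℝ) * l v) * f v * g v * (l v) ^ 2)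
    (Eventually.of_forall fun x => (hA3iv x).aestronglyMeasurable) ?_
    ((hA3iv (-1)).add (hA3iv 1)) ?_
  · filter_upwards [Ioo_mem_nhds (by norm_num : (-1:ℝ) < 0) (by norm_num : (0:ℝ) < 1)] with x hx
    refine Eventually.of_forall fun v => ?_
    have hn0 : (0:ℝ) ≤ f v * g v * (l v) ^ 2 :=
      mul_nonneg (mul_nonneg (hf v) (hg v)) (sq_nonneg _)
    have hnorm : ‖Real.exp (x * l v) * f v * g v * (l v) ^ 2‖
        = Real.exp (x * l v) * (f v * g v * (l v) ^ 2) := by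
      rw [Real.norm_eq_abs, abs_of_nonneg (by nlinarith [Real.exp_pos (x * l v)])]
      ring
    show ‖Real.exp (x * l v) * f v * g v * (l v) ^ 2‖
      ≤ Real.exp ((-1:ℝ) * l v) * f v * g v * (l v) ^ 2 +
        Real.exp ((1:ℝ) * l v) * f v * g v * (l v) ^ 2
    rw [hnorm]
    calc Real.exp (x * l v) * (f v * g v * (l v) ^ 2)
        ≤ (Real.exp ((-1:ℝ) * l v) + Real.exp ((1:ℝ) * l v)) * (f v * g v * (l v) ^ 2) :=
          mul_le_mul_of_nonneg_right (exp_le_add' (a := (-1:ℝ)) (b := 1) hx.1.le hx.2.le) hn0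
      _ = Real.exp ((-1:ℝ) * l v) * f v * g v * (l v) ^ 2 +
          Real.exp ((1:ℝ) * l v) * f v * g v * (l v) ^ 2 := by ring
  · exact Eventually.of_forall fun v => by fun_prop

private lemma MMpos (hf : ∀ v, 0 ≤ f v) (hg : ∀ v, 0 ≤ g v)
    (hA3ii : ∀ a : ℝ, Integrable (fun v => Real.exp (a * l v) * f v * g v))
    (hfg_pos : 0 < ∫ v, f v * g v) (t : ℝ) :
    0 < ∫ v, Real.exp (t * l v) * f v * g v := by
  have hw_int : Integrable (fun v => f v * g v) := by simpa using hA3ii 0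
  have h1 := (integral_pos_iff_support_of_nonneg_ae
    (Eventually.of_forall (fun v => mul_nonneg (hf v) (hg v))) hw_int).mp hfg_pos
  refine (integral_pos_iff_support_of_nonneg_ae
    (Eventually.of_forall (fun v => mul_nonneg (mul_nonneg (Real.exp_pos _).le (hf v)) (hg v)))
    (hA3ii t)).mpr ?_
  have hset : (Function.support fun v => Real.exp (t * l v) * f v * g v)
      = (Function.support fun v => f v * g v) := by
    ext v
    simp [Function.mem_support, mul_ne_zero_iff, Real.exp_ne_zero]
  rw [hset]
  exact h1

private lemma variance_ineq
    (hf : ∀ v, 0 ≤ f v) (hg : ∀ v, 0 ≤ g v)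
    (hA3ii : ∀ a : ℝ, Integrable (fun v => Real.exp (a * l v) * f v * g v))
    (hA3iii : ∀ a : ℝ, Integrable (fun v => Real.exp (a * l v) * f v * g v * l v))
    (hA3iv : ∀ a : ℝ, Integrable (fun v => Real.exp (a * l v) * f v * g v * (l v) ^ 2))
    (t : ℝ) (hMt : 0 < ∫ v, Real.exp (t * l v) * f v * g v) :
    (∫ v, Real.exp (t * l v) * f v * g v * l v) ^ 2 ≤
      (∫ v, Real.exp (t * l v) * f v * g v * (l v) ^ 2) * ∫ v, Real.exp (t * l v) * f v * g v := by
  set Mv := ∫ v, Real.exp (t * l v) * f v * g v with hMv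
  set M1v := ∫ v, Real.exp (t * l v) * f v * g v * l v with hM1v
  set M2v := ∫ v, Real.exp (t * l v) * f v * g v * (l v) ^ 2 with hM2v
  set c := M1v / Mv with hc
  have key : 0 ≤ ∫ v, Real.exp (t * l v) * f v * g v * (l v - c) ^ 2 :=
    integral_nonneg fun v => mul_nonneg
      (mul_nonneg (mul_nonneg (Real.exp_pos _).le (hf v)) (hg v)) (sq_nonneg _)
  have hfun : (fun v => Real.exp (t * l v) * f v * g v * (l v - c) ^ 2)
      = fun v => (Real.exp (t * l v) * f v * g v * (l v) ^ 2 -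
          (2 * c) * (Real.exp (t * l v) * f v * g v * l v)) +
          c ^ 2 * (Real.exp (t * l v) * f v * g v) := funext fun v => by ring
  have i3 : Integrable (fun v => (2 * c) * (Real.exp (t * l v) * f v * g v * l v)) :=
    (hA3iii t).const_mul _
  have i2 : Integrable (fun v => c ^ 2 * (Real.exp (t * l v) * f v * g v)) :=
    (hA3ii t).const_mul _
  have i1 : Integrable (fun v => Real.exp (t * l v) * f v * g v * (l v) ^ 2 -
      (2 * c) * (Real.exp (t * l v) * f v * g v * l v)) := (hA3iv t).sub i3
  rw [hfun, integral_add i1 i2, integral_sub (hA3iv t) i3, integral_const_mul,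
    integral_const_mul] at key
  have hcM : c * Mv = M1v := div_mul_cancel₀ _ hMt.ne'
  have key2 := mul_nonneg key hMt.le
  nlinarith [key2, hcM, hMt]

end helpers

private noncomputable def qaux (x : ℝ) : ℝ := if x = 0 then 1 else (Real.exp x - 1) / x

private lemma exp_sub_one_eq_qaux (x : ℝ) : Real.exp x - 1 = qaux x * x := by
  unfold qaux
  split_ifs with h
  · simp [h]
  · field_simp

private lemma qaux_tendsto : Tendsto qaux (nhds (0:ℝ)) (nhds 1) := by
  have h : Tendsto (fun x : ℝ => (Real.exp x - 1) / x) (nhdsWithin 0 {(0:ℝ)}ᶜ) (nhds 1) := by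
    have h2 := hasDerivAt_iff_tendsto_slope.mp (Real.hasDerivAt_exp 0)
    rw [Real.exp_zero] at h2
    refine h2.congr fun x => ?_
    rw [slope_def_field]
    simp
  have h2 : Tendsto qaux (nhdsWithin 0 {(0:ℝ)}ᶜ) (nhds 1) := by
    refine Tendsto.congr' ?_ h
    filter_upwards [self_mem_nhdsWithin] with x hx
    unfold qaux
    rw [if_neg (by simpa using hx)]
  rw [← nhdsNE_sup_pure (0:ℝ), tendsto_sup]
  refine ⟨h2, ?_⟩
  rw [Filter.tendsto_pure_left]
  intro s hs
  have : qaux 0 = 1 := by simp [qaux]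
  rw [this]
  exact mem_of_mem_nhds hs

private lemma core_limit (M M1 M2 : ℝ → ℝ) (E : ℝ)
    (hMpos : ∀ t, 0 < M t)
    (hdM : ∀ t, HasDerivAt M (M1 t) t)
    (hdM1 : ∀ t, HasDerivAt M1 (M2 t) t)
    (hM2c : ContinuousAt M2 0)
    (hM10 : M1 0 = 0)
    (hE : E = M2 0 / M 0) (hEpos : 0 < E) :
    Tendsto (fun t => (M 0 - Real.exp (-(t * (M1 t / M t))) * M t) /
        ((M1 t / M t) ^ 2 / (2 * E) * M 0)) (nhdsWithin 0 {(0:ℝ)}ᶜ) (nhds 1) := by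
  set VV : ℝ → ℝ := fun t => M1 t / M t with hVV
  set W : ℝ → ℝ := fun t => (M2 t * M t - M1 t * M1 t) / M t ^ 2 with hW
  have hdV : ∀ t, HasDerivAt VV (W t) t := fun t => (hdM1 t).div (hdM t) (hMpos t).ne'
  have hVV0 : VV 0 = 0 := by simp [hVV, hM10]
  have hW0 : W 0 = E := by
    show (M2 0 * M 0 - M1 0 * M1 0) / M 0 ^ 2 = E
    rw [hE, hM10]
    have := (hMpos 0).ne'
    field_simp
    ring
  have hWc : ContinuousAt W 0 := by
    have hMc := (hdM 0).continuousAt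
    have hM1c := (hdM1 0).continuousAt
    exact (((hM2c.mul hMc).sub (hM1c.mul hM1c)).div (hMc.pow 2) (pow_ne_zero 2 (hMpos 0).ne'))
  have hWt : Tendsto W (nhds 0) (nhds E) := hW0 ▸ hWc.tendsto
  -- slope of VV at 0
  have hslope : Tendsto (fun t => VV t / t) (nhdsWithin 0 {(0:ℝ)}ᶜ) (nhds E) := by
    have h := hasDerivAt_iff_tendsto_slope.mp (hdV 0)
    rw [hW0] at h
    refine h.congr fun t => ?_
    rw [slope_def_field, hVV0, sub_zero, sub_zero]
  have hVne : ∀ᶠ t in nhdsWithin 0 {(0:ℝ)}ᶜ, VV t ≠ 0 := by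
    filter_upwards [hslope.eventually (eventually_gt_nhds (by linarith : E/2 < E)),
      self_mem_nhdsWithin] with t ht ht0
    intro hV0
    rw [hV0, zero_div] at ht
    linarith
  -- the function B
  set B : ℝ → ℝ := fun t => Real.log (M t) - Real.log (M 0) - t * VV t with hB
  have hdB : ∀ t, HasDerivAt B (-(t * W t)) t := by
    intro t
    have h1 : HasDerivAt (fun s => Real.log (M s)) (M1 t / M t) t := (hdM t).log (hMpos t).ne'
    have h2 : HasDerivAt (fun s => s * VV s) (1 * VV t + t * W t) t :=
      (hasDerivAt_id t).mul (hdV t)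
    have h3 := (h1.sub_const (Real.log (M 0))).sub h2
    refine h3.congr_deriv ?_
    simp only [hVV]
    ring
  have hB0 : B 0 = 0 := by simp [hB]
  have hBt : Tendsto B (nhds 0) (nhds 0) := by
    have := (hdB 0).continuousAt.tendsto
    rwa [hB0] at this
  -- L'Hopital
  have hBlim : Tendsto (fun t => B t / t ^ 2) (nhdsWithin 0 {(0:ℝ)}ᶜ) (nhds (-(E/2))) := by
    refine HasDerivAt.lhopital_zero_nhdsNE (f' := fun t => -(t * W t)) (g' := fun t => 2 * t)
      (.of_forall fun t => hdB t) (.of_forall fun t => ?_) ?_ ?_ ?_ ?_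
    · simpa using hasDerivAt_pow 2 t
    · filter_upwards [self_mem_nhdsWithin] with t ht
      have : t ≠ 0 := by simpa using ht
      positivity
    · exact hBt.mono_left nhdsWithin_le_nhds
    · have : Tendsto (fun t : ℝ => t ^ 2) (nhds 0) (nhds 0) := by
        simpa using (continuous_pow 2).tendsto (0:ℝ)
      exact this.mono_left nhdsWithin_le_nhds
    · have h : Tendsto (fun t => -(W t / 2)) (nhdsWithin 0 {(0:ℝ)}ᶜ) (nhds (-(E/2))) := by
        exact ((hWt.mono_left nhdsWithin_le_nhds).div_const 2).neg
      refine h.congr' ?_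
      filter_upwards [self_mem_nhdsWithin] with t ht
      have ht0 : t ≠ 0 := by simpa using ht
      field_simp
  -- numerator limit
  have hBn : Tendsto B (nhdsWithin 0 {(0:ℝ)}ᶜ) (nhds 0) := hBt.mono_left nhdsWithin_le_nhds
  have hqB : Tendsto (fun t => qaux (B t)) (nhdsWithin 0 {(0:ℝ)}ᶜ) (nhds 1) :=
    qaux_tendsto.comp hBn
  have hNum : Tendsto (fun t => (1 - Real.exp (B t)) / t ^ 2) (nhdsWithin 0 {(0:ℝ)}ᶜ)
      (nhds (E/2)) := by
    have h := (hqB.mul hBlim).neg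
    have hval : -(1 * -(E/2)) = E/2 := by ring
    rw [hval] at h
    refine h.congr fun t => ?_
    have : (1 : ℝ) - Real.exp (B t) = -(qaux (B t) * B t) := by
      have := exp_sub_one_eq_qaux (B t)
      linarith
    rw [this]
    ring
  -- rewrite numerator
  have hN : ∀ t, M 0 - Real.exp (-(t * VV t)) * M t = M 0 * (1 - Real.exp (B t)) := by
    intro t
    have hexp : Real.exp (B t) = M t / M 0 * Real.exp (-(t * VV t)) := by
      rw [hB]
      simp only
      rw [sub_sub, Real.exp_sub, Real.exp_add, Real.exp_log (hMpos t), Real.exp_log (hMpos 0)]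
      rw [Real.exp_neg]
      field_simp
    rw [hexp]
    have := (hMpos 0).ne'
    field_simp
  -- final assembly
  have hDen : Tendsto (fun t => (VV t / t) ^ 2 * (M 0 / (2 * E))) (nhdsWithin 0 {(0:ℝ)}ᶜ)
      (nhds (E ^ 2 * (M 0 / (2 * E)))) := (hslope.pow 2).mul_const _
  have hNum2 : Tendsto (fun t => M 0 * ((1 - Real.exp (B t)) / t ^ 2))
      (nhdsWithin 0 {(0:ℝ)}ᶜ) (nhds (M 0 * (E/2))) := hNum.const_mul _
  have hfinal := hNum2.div hDen (by have h0 := hMpos 0; positivity)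
  have hval : M 0 * (E / 2) / (E ^ 2 * (M 0 / (2 * E))) = 1 := by
    have h1 := (hMpos 0).ne'
    have h2 := hEpos.ne'
    field_simp
  rw [hval] at hfinal
  refine hfinal.congr' ?_
  filter_upwards [hVne, self_mem_nhdsWithin] with t hVt ht
  have ht0 : t ≠ 0 := by simpa using ht
  have hMt := (hMpos t).ne'
  have hM0 := (hMpos 0).ne'
  have hE' := hEpos.ne'
  have hM1t : M1 t ≠ 0 := by
    intro h
    apply hVt
    simp [hVV, h]
  simp only [Pi.div_apply, hVV, hN t]
  field_simp
  have h := hN t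
  simp only [hVV] at h
  rw [← mul_div_assoc] at h
  linarith


theorem gamma_taylor_expansion_at_zero
    (l : ℝ → ℝ) (hl : Measurable l)
    (g : ℝ → ℝ) (hg_nonneg : ∀ v, 0 ≤ g v) (hg_prob : ∫ v, g v = 1)
    (f : ℝ → ℝ) (hf_nonneg : ∀ v, 0 ≤ f v)
    (hfg_pos : 0 < ∫ v, f v * g v)
    -- (A3)
    (hA3i : ∀ a b : ℝ, Integrable (fun v => (Real.exp (a + b * l v) - 1) * f v * g v))
    (hA3ii : ∀ a : ℝ, Integrable (fun v => Real.exp (a * l v) * f v * g v))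
    (hA3iii : ∀ a : ℝ, Integrable (fun v => Real.exp (a * l v) * f v * g v * l v))
    (hA3iv : ∀ a : ℝ, Integrable (fun v => Real.exp (a * l v) * f v * g v * (l v) ^ 2))
    -- V_x, its generalized inverse, and the bounds v₀(x), v₁(x)
    (V : ℝ → ℝ)
    (hV : ∀ t, V t = (∫ u, Real.exp (t * l u) * l u * f u * g u) /
      (∫ v, Real.exp (t * l v) * f v * g v))
    (Vinv : ℝ → ℝ) (hVinv : ∀ t, Vinv t = sInf {s | t ≤ V s})
    (v₀ v₁ : EReal) (hv₀ : v₀ = ⨅ t : ℝ, (V t : EReal)) (hv₁ : v₁ = ⨆ t : ℝ, (V t : EReal))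
    -- the explicit rate function of the uniform-kernel case
    (γ : ℝ → ℝ)
    (hγ : ∀ lam : ℝ, γ lam = ∫ v, (1 - Real.exp (Vinv lam * (l v - lam))) * f v * g v)
    -- moments of Z, the random variable with density f_v(x) g(v) / ∫ f_u(x) g(u) du
    (EZl EZl2 : ℝ)
    (hEZl : EZl = (∫ v, l v * f v * g v) / (∫ v, f v * g v))
    (hEZl2 : EZl2 = (∫ v, (l v) ^ 2 * f v * g v) / (∫ v, f v * g v))
    (hEZl0 : EZl = 0) (hEZl2pos : 0 < EZl2) :
    Tendsto (fun lam : ℝ => γ lam / (lam ^ 2 / (2 * EZl2) * ∫ v, f v * g v))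
      (nhdsWithin 0 ({lam : ℝ | v₀ < (lam : EReal) ∧ (lam : EReal) < v₁} \ {0}))
      (nhds 1) := by
  have hfg_ne : (∫ v, f v * g v) ≠ 0 := ne_of_gt hfg_pos
  have hw_int : Integrable (fun v => f v * g v) := by simpa using hA3ii 0
  set M : ℝ → ℝ := fun t => ∫ v, Real.exp (t * l v) * f v * g v with hMdef
  set M1 : ℝ → ℝ := fun t => ∫ v, Real.exp (t * l v) * f v * g v * l v with hM1def
  set M2 : ℝ → ℝ := fun t => ∫ v, Real.exp (t * l v) * f v * g v * (l v) ^ 2 with hM2def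
  have hMpos : ∀ t, 0 < M t := fun t => MMpos hf_nonneg hg_nonneg hA3ii hfg_pos t
  have hdM : ∀ t, HasDerivAt M (M1 t) t := fun t =>
    hasDerivAt_MM hf_nonneg hg_nonneg hA3ii hA3iii t
  have hdM1 : ∀ t, HasDerivAt M1 (M2 t) t := fun t =>
    hasDerivAt_MM1 hf_nonneg hg_nonneg hA3iii hA3iv t
  have hM2c : ContinuousAt M2 0 := contMM2 hf_nonneg hg_nonneg hA3iv
  have hM0 : M 0 = ∫ v, f v * g v := by
    simp only [hMdef, zero_mul, Real.exp_zero, one_mul]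
  have hM10 : M1 0 = 0 := by
    have h2 := hEZl0
    rw [hEZl] at h2
    have h1 : (∫ v, l v * f v * g v) = 0 := by
      rcases div_eq_zero_iff.mp h2 with h | h
      · exact h
      · exact absurd h hfg_ne
    have h3 : M1 0 = ∫ v, l v * f v * g v := by
      simp only [hM1def, zero_mul, Real.exp_zero, one_mul]
      congr 1
      funext v
      ring
    rw [h3, h1]
  have hE2 : EZl2 = M2 0 / M 0 := by
    rw [hEZl2, hM0]
    congr 1
    · simp only [hM2def, zero_mul, Real.exp_zero, one_mul]
      congr 1
      funext v
      ring
  have hVdef : ∀ t, V t = M1 t / M t := by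
    intro t
    rw [hV t]
    congr 1
    simp only [hM1def]
    congr 1
    funext u
    ring
  have hVfun : V = fun t => M1 t / M t := funext hVdef
  set W : ℝ → ℝ := fun t => (M2 t * M t - M1 t * M1 t) / M t ^ 2 with hWdef
  have hdV : ∀ t, HasDerivAt V (W t) t := by
    intro t
    rw [hVfun]
    exact (hdM1 t).div (hdM t) (hMpos t).ne'
  have hVmono : Monotone V := by
    refine monotone_of_deriv_nonneg (fun t => (hdV t).differentiableAt) (fun t => ?_)
    rw [(hdV t).deriv]
    have hvar : (M1 t) ^ 2 ≤ M2 t * M t :=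
      variance_ineq hf_nonneg hg_nonneg hA3ii hA3iii hA3iv t (hMpos t)
    show 0 ≤ (M2 t * M t - M1 t * M1 t) / M t ^ 2
    apply div_nonneg
    · nlinarith [hvar]
    · positivity
  have hVdiff : Differentiable ℝ V := fun t => (hdV t).differentiableAt
  have hVcont : Continuous V := hVdiff.continuous
  have hV0 : V 0 = 0 := by rw [hVdef 0, hM10, zero_div]
  -- the core limit
  have hcore0 := core_limit M M1 M2 EZl2 hMpos hdM hdM1 hM2c hM10 hE2 hEZl2pos
  have hcore : Tendsto (fun t => (M 0 - Real.exp (-(t * V t)) * M t) /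
      ((V t) ^ 2 / (2 * EZl2) * M 0)) (nhdsWithin 0 {(0:ℝ)}ᶜ) (nhds 1) := by
    refine hcore0.congr fun t => ?_
    rw [hVdef t]
  -- properties of the generalized inverse
  have hbounds : ∀ lam : ℝ, v₀ < (lam : EReal) → (lam : EReal) < v₁ →
      (V (Vinv lam) = lam ∧ (∀ s, lam ≤ V s → Vinv lam ≤ s) ∧
        (∀ s, V s < lam → s ≤ Vinv lam)) := by
    intro lam h0 h1
    obtain ⟨s₀, hs₀⟩ : ∃ s₀, V s₀ < lam := by
      rw [hv₀, iInf_lt_iff] at h0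
      obtain ⟨i, hi⟩ := h0
      exact ⟨i, by exact_mod_cast hi⟩
    obtain ⟨s₁, hs₁⟩ : ∃ s₁, lam < V s₁ := by
      rw [hv₁, lt_iSup_iff] at h1
      obtain ⟨i, hi⟩ := h1
      exact ⟨i, by exact_mod_cast hi⟩
    have hTne : {s | lam ≤ V s}.Nonempty := ⟨s₁, hs₁.le⟩
    have hTbdd : BddBelow {s | lam ≤ V s} := by
      refine ⟨s₀, fun u hu => ?_⟩
      by_contra hc
      push_neg at hc
      have := hVmono hc.le
      have : V u < lam := lt_of_le_of_lt this hs₀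
      exact absurd hu (not_le.mpr this)
    have hTclosed : IsClosed {s | lam ≤ V s} := isClosed_le continuous_const hVcont
    have hmem : lam ≤ V (Vinv lam) := by
      have := hTclosed.csInf_mem hTne hTbdd
      rw [← hVinv lam] at this
      exact this
    have hle : ∀ s, lam ≤ V s → Vinv lam ≤ s := fun s hs => by
      rw [hVinv lam]; exact csInf_le hTbdd hs
    have hge : ∀ s, V s < lam → s ≤ Vinv lam := fun s hs => by
      rw [hVinv lam]
      refine le_csInf hTne fun u hu => ?_
      by_contra hc
      push_neg at hc
      exact absurd hu (not_le.mpr (lt_of_le_of_lt (hVmono hc.le) hs))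
    have hs01 : s₀ ≤ s₁ := by
      by_contra hc
      push_neg at hc
      have := hVmono hc.le
      linarith
    obtain ⟨s, hsmem, hsval⟩ := intermediate_value_Icc hs01 hVcont.continuousOn
      (mem_Icc.mpr ⟨hs₀.le, hs₁.le⟩)
    refine ⟨le_antisymm ?_ hmem, hle, hge⟩
    calc V (Vinv lam) ≤ V s := hVmono (hle s hsval.ge)
    _ = lam := hsval
  -- slope of V near 0
  have hdV0 : HasDerivAt V EZl2 0 := by
    have h := hdV 0
    have hW0 : W 0 = EZl2 := by
      show (M2 0 * M 0 - M1 0 * M1 0) / M 0 ^ 2 = EZl2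
      rw [hM10, hE2]
      have := (hMpos 0).ne'
      field_simp
      ring
    rwa [hW0] at h
  have hslope : Tendsto (fun t => V t / t) (nhdsWithin 0 {(0:ℝ)}ᶜ) (nhds EZl2) := by
    have h := hasDerivAt_iff_tendsto_slope.mp hdV0
    refine h.congr fun t => ?_
    rw [slope_def_field, hV0, sub_zero, sub_zero]
  obtain ⟨δ, hδpos, hδprop⟩ : ∃ δ > 0, ∀ t : ℝ, t ≠ 0 → |t| < δ → EZl2 / 2 < V t / t := by
    have hev := hslope.eventually (eventually_gt_nhds (by linarith : EZl2/2 < EZl2))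
    rw [eventually_nhdsWithin_iff] at hev
    rcases Metric.eventually_nhds_iff.mp hev with ⟨δ, hδpos, hδ2⟩
    exact ⟨δ, hδpos, fun t ht hlt =>
      hδ2 (by simpa [Real.dist_eq] using hlt) (by simpa using ht)⟩
  have hsignp : ∀ t : ℝ, 0 < t → t < δ → 0 < V t := by
    intro t h1 h2
    have h3 := hδprop t h1.ne' (by rwa [abs_of_pos h1])
    have h4 : 0 < V t / t := lt_trans (by linarith) h3
    rcases div_pos_iff.mp h4 with h | h
    · exact h.1
    · linarith [h.2]
  have hsignn : ∀ t : ℝ, -δ < t → t < 0 → V t < 0 := by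
    intro t h1 h2
    have h3 := hδprop t h2.ne (by rw [abs_of_neg h2]; linarith)
    have h4 : 0 < V t / t := lt_trans (by linarith) h3
    rcases div_pos_iff.mp h4 with h | h
    · linarith [h.2]
    · exact h.1
  set F := nhdsWithin (0:ℝ)
    ({lam : ℝ | v₀ < (lam : EReal) ∧ (lam : EReal) < v₁} \ {0}) with hF
  have hVinv_tendsto : Tendsto Vinv F (nhds 0) := by
    rw [Metric.tendsto_nhds]
    intro ε hε
    set ε' := min (ε/2) (δ/2) with hε'
    have hε'pos : 0 < ε' := lt_min (by linarith) (by linarith)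
    have hε'δ : ε' < δ := lt_of_le_of_lt (min_le_right _ _) (by linarith)
    have hVpos : 0 < V ε' := hsignp ε' hε'pos hε'δ
    have hVneg : V (-ε') < 0 := hsignn (-ε') (by linarith) (by linarith)
    set δ' := min (V ε') (-(V (-ε'))) with hδ'
    have hδ'pos : 0 < δ' := lt_min hVpos (by linarith)
    have hev : ∀ᶠ lam in F, |lam| < δ' := by
      apply eventually_nhdsWithin_of_eventually_nhds
      have hmemb := Metric.ball_mem_nhds (0:ℝ) hδ'pos
      filter_upwards [hmemb] with x hx
      simpa [Real.dist_eq] using hx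
    filter_upwards [hev, self_mem_nhdsWithin] with lam hlam hmemS
    obtain ⟨hVV, hle, hge⟩ := hbounds lam hmemS.1.1 hmemS.1.2
    have h1 : Vinv lam ≤ ε' := by
      refine hle ε' ?_
      have : lam < δ' := lt_of_le_of_lt (le_abs_self lam) hlam
      have : lam < V ε' := lt_of_lt_of_le this (min_le_left _ _)
      exact this.le
    have h2 : -ε' ≤ Vinv lam := by
      refine hge (-ε') ?_
      have ha : -δ' < lam := by
        have := neg_abs_le lam
        linarith [hlam]
      have hb : V (-ε') ≤ -δ' := by
        have := min_le_right (V ε') (-(V (-ε')))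
        linarith
      linarith
    rw [Real.dist_eq, sub_zero]
    have habs : |Vinv lam| ≤ ε' := abs_le.mpr ⟨h2, h1⟩
    have : ε' ≤ ε/2 := min_le_left _ _
    linarith
  have hVinv_ne : ∀ᶠ lam in F, Vinv lam ∈ ({(0:ℝ)}ᶜ : Set ℝ) := by
    filter_upwards [self_mem_nhdsWithin] with lam hmemS
    obtain ⟨hVV, -, -⟩ := hbounds lam hmemS.1.1 hmemS.1.2
    intro h0
    simp only [mem_singleton_iff] at h0
    apply hmemS.2
    have : lam = 0 := by rw [← hVV, h0, hV0]
    simpa using this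
  have hVinvT : Tendsto Vinv F (nhdsWithin 0 {(0:ℝ)}ᶜ) :=
    tendsto_nhdsWithin_iff.mpr ⟨hVinv_tendsto, hVinv_ne⟩
  have hcomp := hcore.comp hVinvT
  refine hcomp.congr' ?_
  filter_upwards [self_mem_nhdsWithin] with lam hmemS
  obtain ⟨hVV, -, -⟩ := hbounds lam hmemS.1.1 hmemS.1.2
  have hγeq : γ lam = (∫ v, f v * g v) -
      Real.exp (-(Vinv lam * lam)) * ∫ v, Real.exp (Vinv lam * l v) * f v * g v := by
    rw [hγ lam]
    have hpt : (fun v => (1 - Real.exp (Vinv lam * (l v - lam))) * f v * g v)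
        = fun v => f v * g v - Real.exp (-(Vinv lam * lam)) *
            (Real.exp (Vinv lam * l v) * f v * g v) := by
      funext v
      rw [show Vinv lam * (l v - lam) = -(Vinv lam * lam) + Vinv lam * l v by ring,
        Real.exp_add]
      ring
    rw [hpt, integral_sub hw_int ((hA3ii (Vinv lam)).const_mul _), integral_const_mul]
  show (M 0 - Real.exp (-(Vinv lam * V (Vinv lam))) * M (Vinv lam)) /
      ((V (Vinv lam)) ^ 2 / (2 * EZl2) * M 0)
    = γ lam / (lam ^ 2 / (2 * EZl2) * ∫ v, f v * g v)
  rw [hVV, hγeq]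
  simp only [hMdef, zero_mul, Real.exp_zero, one_mul]
end

section
/- Suppose the kernel K : [0,∞) → ℝ is Lipschitz with constant M and satisfies K(t) ≥ K_0 > 0 for all t ≥ 0. Then, deterministically, for every c ∈ E, every ν > 0 and every n ≥ 1: sup_{x : d(x,c) ≤ ν} |r̂_n^l(x) − r̂_n^l(c)| ≤ (2 M ν/(K_0² n h)) Σ_{i=1}^n |l(Y_i)| K(d(c, X_i)/h). -/
set_option autoImplicit false

open Set

theorem deterministic_oscillation_bound
    {E : Type*} (d : E → E → ℝ)
    (hd_nonneg : ∀ a b, 0 ≤ d a b) (hd_symm : ∀ a b, d a b = d b a)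
    (hd_tri : ∀ a b c, d a c ≤ d a b + d b c) (hd_refl : ∀ a, d a a = 0)
    (K : ℝ → ℝ) (M : ℝ) (hK_lip : ∀ s t, |K s - K t| ≤ M * |s - t|)
    (K₀ : ℝ) (hK₀_pos : 0 < K₀) (hK₀ : ∀ t : ℝ, 0 ≤ t → K₀ ≤ K t)
    (l : ℝ → ℝ)
    (n : ℕ) (hn : 1 ≤ n) (h : ℝ) (hh : 0 < h)
    (X : ℕ → E) (Y : ℕ → ℝ)
    (rhat : E → ℝ)
    (hrhat : ∀ x, rhat x =
      (∑ i ∈ Finset.range n, l (Y i) * K (d x (X i) / h)) /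
      (∑ i ∈ Finset.range n, K (d x (X i) / h)))
    (c : E) (ν : ℝ) (hν : 0 < ν) :
    ∀ x, d x c ≤ ν →
      |rhat x - rhat c| ≤ (2 * M * ν / (K₀ ^ 2 * n * h)) *
        ∑ i ∈ Finset.range n, |l (Y i)| * K (d c (X i) / h) := by
  intro x hx
  have hM : 0 ≤ M := by
    have h1 := hK_lip 0 1
    have h2 : |(0:ℝ) - 1| = 1 := by norm_num
    nlinarith [abs_nonneg (K 0 - K 1)]
  have hnpos : (0:ℝ) < n := by exact_mod_cast hn
  -- abbreviations
  set A : E → ℝ := fun z => ∑ i ∈ Finset.range n, l (Y i) * K (d z (X i) / h) with hA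
  set B : E → ℝ := fun z => ∑ i ∈ Finset.range n, K (d z (X i) / h) with hB
  set S : ℝ := ∑ i ∈ Finset.range n, |l (Y i)| * K (d c (X i) / h) with hSdef
  have hKlb : ∀ (z : E) (i : ℕ), K₀ ≤ K (d z (X i) / h) := by
    intro z i
    exact hK₀ _ (div_nonneg (hd_nonneg _ _) hh.le)
  have hSnn : 0 ≤ S := by
    apply Finset.sum_nonneg
    intro i _
    exact mul_nonneg (abs_nonneg _) (le_trans hK₀_pos.le (hKlb c i))
  have hBlb : ∀ z : E, (n : ℝ) * K₀ ≤ B z := by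
    intro z
    calc (n : ℝ) * K₀ = ∑ _i ∈ Finset.range n, K₀ := by
          rw [Finset.sum_const, Finset.card_range, nsmul_eq_mul]
      _ ≤ B z := Finset.sum_le_sum (fun i _ => hKlb z i)
  have hBpos : ∀ z : E, 0 < B z := fun z =>
    lt_of_lt_of_le (by positivity) (hBlb z)
  -- pointwise Lipschitz bound
  have hKdiff : ∀ i : ℕ, |K (d x (X i) / h) - K (d c (X i) / h)| ≤ M * ν / h := by
    intro i
    have h1 : |d x (X i) - d c (X i)| ≤ ν := by
      rw [abs_sub_le_iff]
      constructor
      · have := hd_tri x c (X i); linarith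
      · have := hd_tri c x (X i)
        have hsymm := hd_symm c x
        linarith
    calc |K (d x (X i) / h) - K (d c (X i) / h)|
        ≤ M * |d x (X i) / h - d c (X i) / h| := hK_lip _ _
      _ = M * (|d x (X i) - d c (X i)| / h) := by
          rw [div_sub_div_same, abs_div, abs_of_pos hh]
      _ ≤ M * (ν / h) := by
          apply mul_le_mul_of_nonneg_left _ hM
          gcongr
      _ = M * ν / h := by ring
  have hfrac : M * ν / h ≤ M * ν / (K₀ * h) * K₀ := by
    have e : M * ν / (K₀ * h) * K₀ = M * ν / h := by
      field_simp
    linarith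
  have hfracnn : 0 ≤ M * ν / (K₀ * h) := by positivity
  -- numerator difference bound
  have hAdiff : |A x - A c| ≤ M * ν / (K₀ * h) * S := by
    have : A x - A c = ∑ i ∈ Finset.range n,
        l (Y i) * (K (d x (X i) / h) - K (d c (X i) / h)) := by
      rw [hA, ← Finset.sum_sub_distrib]
      congr 1; ext i; ring
    rw [this, hSdef, Finset.mul_sum]
    refine (Finset.abs_sum_le_sum_abs _ _).trans (Finset.sum_le_sum ?_)
    intro i _
    rw [abs_mul]
    calc |l (Y i)| * |K (d x (X i) / h) - K (d c (X i) / h)|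
        ≤ |l (Y i)| * (M * ν / h) :=
          mul_le_mul_of_nonneg_left (hKdiff i) (abs_nonneg _)
      _ ≤ |l (Y i)| * (M * ν / (K₀ * h) * K (d c (X i) / h)) := by
          apply mul_le_mul_of_nonneg_left _ (abs_nonneg _)
          exact hfrac.trans (mul_le_mul_of_nonneg_left (hKlb c i) hfracnn)
      _ = M * ν / (K₀ * h) * (|l (Y i)| * K (d c (X i) / h)) := by ring
  have hAc : |A c| ≤ S := by
    rw [hA, hSdef]
    refine (Finset.abs_sum_le_sum_abs _ _).trans (Finset.sum_le_sum ?_)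
    intro i _
    rw [abs_mul, abs_of_nonneg (le_trans hK₀_pos.le (hKlb c i))]
  have hBdiff : |B c - B x| ≤ (n : ℝ) * (M * ν / h) := by
    have : B c - B x = ∑ i ∈ Finset.range n,
        (K (d c (X i) / h) - K (d x (X i) / h)) := by
      rw [hB, ← Finset.sum_sub_distrib]
    rw [this]
    refine (Finset.abs_sum_le_sum_abs _ _).trans ?_
    calc ∑ i ∈ Finset.range n, |K (d c (X i) / h) - K (d x (X i) / h)|
        ≤ ∑ _i ∈ Finset.range n, M * ν / h := by
          refine Finset.sum_le_sum fun i _ => ?_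
          rw [abs_sub_comm]; exact hKdiff i
      _ = (n : ℝ) * (M * ν / h) := by
          rw [Finset.sum_const, Finset.card_range, nsmul_eq_mul]
  -- identity
  have hBx := hBpos x
  have hBc := hBpos c
  have hiden : rhat x - rhat c =
      (A x - A c) / B x + A c * (B c - B x) / (B x * B c) := by
    rw [hrhat x, hrhat c]
    show A x / B x - A c / B c = _
    field_simp
    ring
  have hstep : |rhat x - rhat c| ≤
      |A x - A c| / B x + |A c| * |B c - B x| / (B x * B c) := by
    rw [hiden]
    refine (abs_add_le _ _).trans ?_
    rw [abs_div, abs_div, abs_mul, abs_of_pos hBx, abs_mul,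
      abs_of_pos hBx, abs_of_pos hBc]
  have hnK : (0:ℝ) < (n : ℝ) * K₀ := by positivity
  have hT1 : |A x - A c| / B x ≤ (M * ν / (K₀ ^ 2 * n * h)) * S := by
    have : |A x - A c| / B x ≤ (M * ν / (K₀ * h) * S) / ((n : ℝ) * K₀) :=
      div_le_div₀ (by positivity) hAdiff hnK (hBlb x)
    refine this.trans_eq ?_
    field_simp
    try ring
    try tauto
  have hT2 : |A c| * |B c - B x| / (B x * B c) ≤ (M * ν / (K₀ ^ 2 * n * h)) * S := by
    have hnum : |A c| * |B c - B x| ≤ S * ((n : ℝ) * (M * ν / h)) :=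
      mul_le_mul hAc hBdiff (abs_nonneg _) hSnn
    have hden : ((n : ℝ) * K₀) * ((n : ℝ) * K₀) ≤ B x * B c :=
      mul_le_mul (hBlb x) (hBlb c) hnK.le (hBx.le)
    have : |A c| * |B c - B x| / (B x * B c) ≤
        (S * ((n : ℝ) * (M * ν / h))) / (((n : ℝ) * K₀) * ((n : ℝ) * K₀)) :=
      div_le_div₀ (by positivity) hnum (by positivity) hden
    refine this.trans_eq ?_
    field_simp
    try ring
    try tauto
  calc |rhat x - rhat c| ≤
      |A x - A c| / B x + |A c| * |B c - B x| / (B x * B c) := hstep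
    _ ≤ (M * ν / (K₀ ^ 2 * n * h)) * S + (M * ν / (K₀ ^ 2 * n * h)) * S :=
        add_le_add hT1 hT2
    _ = (2 * M * ν / (K₀ ^ 2 * n * h)) * S := by ring
end
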